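/- arXiv:1909.11521 — 7 statements merged into one kernel-verified Lean document; each statement's English description precedes it below -/
import Mathlib

section
/- In a 2-acyclic Cayley frame, for all worlds w and all sets of agents α, β, the intersection of the α-class and β-class of w equals the (α∩β)-class of w: [w]_α ∩ [w]_β = [w]_{α∩β}. -/
/-- The `α`-class (coset) of a world `w` in the Cayley frame given by a group `G`
with generators partitioned among agents by `gen : Γ → Set G`. -/
def cayleyClass {G : Type*} [Group G] {Γ : Type*} (gen : Γ → Set G)
    (α : Set Γ) (w : G) : Set G :=
  {v | w⁻¹ * v ∈ Subgroup.closure (⋃ a ∈ α, gen a)}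

/-- A Cayley frame is 2-acyclic (contains no coset cycle of length 2) if and only if
for all worlds `w` and sets of agents `α, β`: `[w]_α ∩ [w]_β = [w]_{α∩β}`. -/
theorem stmt1 (G : Type*) [Group G] (Γ : Type*) (gen : Γ → Set G)
    (hinv : ∀ a : Γ, ∀ e ∈ gen a, e ≠ 1 ∧ e ^ 2 = 1)
    (hgen : Subgroup.closure (⋃ a : Γ, gen a) = ⊤) :
    (¬ ∃ (w v : G) (α β : Set Γ),
        cayleyClass gen α w = cayleyClass gen α v ∧
        cayleyClass gen β w = cayleyClass gen β v ∧
        cayleyClass gen (α ∩ β) w ∩ cayleyClass gen (α ∩ β) v = ∅) ↔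
    (∀ (w : G) (α β : Set Γ),
        cayleyClass gen α w ∩ cayleyClass gen β w = cayleyClass gen (α ∩ β) w) := by
  have self_mem : ∀ (α : Set Γ) (w : G), w ∈ cayleyClass gen α w := by
    intro α w; simp only [cayleyClass, Set.mem_setOf_eq, inv_mul_cancel]; exact Subgroup.one_mem _
  have eq_of_mem : ∀ (α : Set Γ) (w v : G), v ∈ cayleyClass gen α w →
      cayleyClass gen α w = cayleyClass gen α v := by
    intro α w v hv
    ext u
    simp only [cayleyClass, Set.mem_setOf_eq] at *
    constructor
    · intro hu
      have := (Subgroup.closure (⋃ a ∈ α, gen a)).mul_mem (Subgroup.inv_mem _ hv) hu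
      simpa [mul_assoc] using this
    · intro hu
      have := (Subgroup.closure (⋃ a ∈ α, gen a)).mul_mem hv hu
      simpa [mul_assoc] using this
  have mono : ∀ (α β : Set Γ), α ⊆ β →
      Subgroup.closure (⋃ a ∈ α, gen a) ≤ Subgroup.closure (⋃ a ∈ β, gen a) := by
    intro α β hab
    apply Subgroup.closure_mono
    exact Set.iUnion₂_mono' fun a ha => ⟨a, hab ha, le_rfl⟩
  constructor
  · intro h w α β
    apply Set.Subset.antisymm
    · intro v hv
      by_contra hvn
      apply h
      refine ⟨w, v, α, β, eq_of_mem α w v hv.1, eq_of_mem β w v hv.2, ?_⟩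
      ext u
      simp only [Set.mem_inter_iff, Set.mem_empty_iff_false, iff_false, not_and]
      intro hu1 hu2
      apply hvn
      have : w⁻¹ * v = (w⁻¹ * u) * (v⁻¹ * u)⁻¹ := by group
      have hm : w⁻¹ * v ∈ Subgroup.closure (⋃ a ∈ α ∩ β, gen a) := by
        rw [this]
        exact Subgroup.mul_mem _ hu1 (Subgroup.inv_mem _ hu2)
      exact hm
    · intro v hv
      exact ⟨mono (α ∩ β) α Set.inter_subset_left hv,
             mono (α ∩ β) β Set.inter_subset_right hv⟩
  · rintro h ⟨w, v, α, β, hα, hβ, hdisj⟩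
    have hvα : v ∈ cayleyClass gen α w := hα ▸ self_mem α v
    have hvβ : v ∈ cayleyClass gen β w := hβ ▸ self_mem β v
    have hvi : v ∈ cayleyClass gen (α ∩ β) w := by
      rw [← h w α β]; exact ⟨hvα, hvβ⟩
    have : v ∈ (∅ : Set G) := hdisj ▸ ⟨hvi, self_mem (α ∩ β) v⟩
    exact this
end

section
/- In a 2-acyclic Cayley frame, the minimal connecting sets of agents satisfy a triangle inequality: agt(u,w) ⊆ agt(u,v) ∪ agt(v,w) for all worlds u, v, w. -/
def cayleyRel {G : Type*} [Group G] {Γ : Type*} (gen : Γ → Set G)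
    (α : Set Γ) (w v : G) : Prop :=
  w⁻¹ * v ∈ Subgroup.closure (⋃ a ∈ α, gen a)

/-- Triangle inequality for the minimal connecting sets of agents in a 2-acyclic
Cayley frame: `agt(u,w) ⊆ agt(u,v) ∪ agt(v,w)`. -/
theorem stmt3 (G : Type*) [Group G] (Γ : Type*) (gen : Γ → Set G)
    (hinv : ∀ a : Γ, ∀ e ∈ gen a, e ≠ 1 ∧ e ^ 2 = 1)
    (hgen : Subgroup.closure (⋃ a : Γ, gen a) = ⊤)
    (h2 : ∀ (w v : G) (α β : Set Γ),
      cayleyRel gen α w v → cayleyRel gen β w v → cayleyRel gen (α ∩ β) w v)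
    (agt : G → G → Set Γ)
    (hagt : ∀ (w v : G) (β : Set Γ), cayleyRel gen β w v ↔ agt w v ⊆ β)
    (u v w : G) :
    agt u w ⊆ agt u v ∪ agt v w := by
  rw [← hagt]
  have h1 : cayleyRel gen (agt u v ∪ agt v w) u v :=
    (hagt u v _).mpr Set.subset_union_left
  have h2' : cayleyRel gen (agt u v ∪ agt v w) v w :=
    (hagt v w _).mpr Set.subset_union_right
  have : u⁻¹ * w = (u⁻¹ * v) * (v⁻¹ * w) := by group
  unfold cayleyRel at *
  rw [this]
  exact mul_mem h1 h2'
end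

section
/- In a 2-acyclic Cayley frame, for any worlds w, v, any agent a ∉ agt(w,v), and any v' ≠ v with (v,v') ∈ R_{{a}}: agt(w,v') = agt(w,v) ∪ {a}. -/
lemma cayleyRel_mono {G : Type*} [Group G] {Γ : Type*} (gen : Γ → Set G)
    {α β : Set Γ} (hab : α ⊆ β) {w v : G} (h : cayleyRel gen α w v) :
    cayleyRel gen β w v :=
  Subgroup.closure_mono (Set.biUnion_subset_biUnion_left hab) h

lemma cayleyRel_symm {G : Type*} [Group G] {Γ : Type*} (gen : Γ → Set G)
    {α : Set Γ} {w v : G} (h : cayleyRel gen α w v) :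
    cayleyRel gen α v w := by
  have := inv_mem h
  simpa [cayleyRel, mul_inv_rev] using this

lemma cayleyRel_trans {G : Type*} [Group G] {Γ : Type*} (gen : Γ → Set G)
    {α β : Set Γ} {w v u : G} (h1 : cayleyRel gen α w v)
    (h2 : cayleyRel gen β v u) : cayleyRel gen (α ∪ β) w u := by
  have h1' : cayleyRel gen (α ∪ β) w v := cayleyRel_mono gen Set.subset_union_left h1
  have h2' : cayleyRel gen (α ∪ β) v u := cayleyRel_mono gen Set.subset_union_right h2
  have := mul_mem h1' h2'
  simpa [cayleyRel, mul_assoc] using this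

lemma cayleyRel_empty {G : Type*} [Group G] {Γ : Type*} (gen : Γ → Set G)
    {w v : G} (h : cayleyRel gen (∅ : Set Γ) w v) : w = v := by
  unfold cayleyRel at h
  simp only [Set.mem_empty_iff_false, Set.iUnion_of_empty, Set.iUnion_empty,
    Subgroup.closure_empty, Subgroup.mem_bot] at h
  have : v = w := by
    have := congrArg (w * ·) h
    simpa [mul_assoc] using this
  exact this.symm

/-- In a 2-acyclic Cayley frame, for any worlds `w, v`, any agent `a ∉ agt(w,v)`,
and any `v' ≠ v` with `(v,v') ∈ R_{{a}}`: `agt(w,v') = agt(w,v) ∪ {a}`. -/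
theorem stmt4 (G : Type*) [Group G] (Γ : Type*) (gen : Γ → Set G)
    (hinv : ∀ a : Γ, ∀ e ∈ gen a, e ≠ 1 ∧ e ^ 2 = 1)
    (hgen : Subgroup.closure (⋃ a : Γ, gen a) = ⊤)
    (h2 : ∀ (w v : G) (α β : Set Γ),
      cayleyRel gen α w v → cayleyRel gen β w v → cayleyRel gen (α ∩ β) w v)
    (agt : G → G → Set Γ)
    (hagt : ∀ (w v : G) (β : Set Γ), cayleyRel gen β w v ↔ agt w v ⊆ β)
    (w v v' : G) (a : Γ)
    (ha : a ∉ agt w v) (hne : v' ≠ v) (hr : cayleyRel gen {a} v v') :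
    agt w v' = agt w v ∪ {a} := by
  have hwv : cayleyRel gen (agt w v) w v := (hagt w v _).2 le_rfl
  have hwv' : cayleyRel gen (agt w v') w v' := (hagt w v' _).2 le_rfl
  -- a ∈ agt w v'
  have hmem : a ∈ agt w v' := by
    by_contra haz
    have hvw : cayleyRel gen (agt w v) v w := cayleyRel_symm gen hwv
    have hvv' : cayleyRel gen (agt w v ∪ agt w v') v v' := cayleyRel_trans gen hvw hwv'
    have := h2 v v' _ _ hr hvv'
    have hempty : ({a} : Set Γ) ∩ (agt w v ∪ agt w v') = ∅ := by
      ext x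
      simp only [Set.mem_inter_iff, Set.mem_singleton_iff, Set.mem_union,
        Set.mem_empty_iff_false, iff_false]
      rintro ⟨rfl, h | h⟩ <;> [exact ha h; exact haz h]
    rw [hempty] at this
    exact hne (cayleyRel_empty gen this).symm
  apply le_antisymm
  · -- agt w v' ⊆ agt w v ∪ {a}
    have : cayleyRel gen (agt w v ∪ {a}) w v' := cayleyRel_trans gen hwv hr
    exact (hagt w v' _).1 this
  · rintro x (hx | hx)
    · -- agt w v ⊆ agt w v'
      have hv'v : cayleyRel gen ({a} : Set Γ) v' v := cayleyRel_symm gen hr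
      have hwv2 : cayleyRel gen (agt w v' ∪ {a}) w v := cayleyRel_trans gen hwv' hv'v
      have := h2 w v _ _ hwv2 hwv
      have hsub : agt w v ⊆ (agt w v' ∪ {a}) ∩ agt w v := (hagt w v _).1 this
      rcases (hsub hx).1 with h | h
      · exact h
      · exact absurd (h ▸ hx) ha
    · exact hx ▸ hmem
end

section
/- In a 2-acyclic Cayley frame, for any worlds w, v and any agent a ∈ agt(w,v), there is at most one world v' in the {a}-class of v such that agt(w,v') = agt(w,v) \ {a}. -/
/-- In a 2-acyclic Cayley frame, for any worlds `w, v` and any agent `a ∈ agt(w,v)`,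
there is at most one world `v'` in the `{a}`-class of `v` with
`agt(w,v') = agt(w,v) \ {a}`. -/
theorem stmt5 (G : Type*) [Group G] (Γ : Type*) (gen : Γ → Set G)
    (hinv : ∀ a : Γ, ∀ e ∈ gen a, e ≠ 1 ∧ e ^ 2 = 1)
    (hgen : Subgroup.closure (⋃ a : Γ, gen a) = ⊤)
    (h2 : ∀ (w v : G) (α β : Set Γ),
      cayleyRel gen α w v → cayleyRel gen β w v → cayleyRel gen (α ∩ β) w v)
    (agt : G → G → Set Γ)
    (hagt : ∀ (w v : G) (β : Set Γ), cayleyRel gen β w v ↔ agt w v ⊆ β)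
    (w v : G) (a : Γ) (ha : a ∈ agt w v) :
    ∀ v' v'' : G, cayleyRel gen {a} v v' → cayleyRel gen {a} v v'' →
      agt w v' = agt w v \ {a} → agt w v'' = agt w v \ {a} → v' = v'' := by
  intro v' v'' h1 h1' h3 h3'
  -- v'⁻¹ * v'' ∈ closure of {a}-generators
  have hA : cayleyRel gen {a} v' v'' := by
    unfold cayleyRel at h1 h1' ⊢
    have := mul_mem (inv_mem h1) h1'
    simpa [mul_assoc] using this
  -- v'⁻¹ * v'' ∈ closure of (agt w v \ {a})-generators
  have hB : cayleyRel gen (agt w v \ {a}) v' v'' := by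
    have hb1 : cayleyRel gen (agt w v \ {a}) w v' :=
      (hagt w v' _).mpr (by rw [h3])
    have hb2 : cayleyRel gen (agt w v \ {a}) w v'' :=
      (hagt w v'' _).mpr (by rw [h3'])
    unfold cayleyRel at hb1 hb2 ⊢
    have := mul_mem (inv_mem hb1) hb2
    simpa [mul_assoc] using this
  have hC := h2 v' v'' _ _ hA hB
  have hempty : ({a} : Set Γ) ∩ (agt w v \ {a}) = ∅ := by
    ext x; simp (config := {contextual := true}) [Set.mem_inter_iff]
  unfold cayleyRel at hC
  rw [hempty] at hC
  simp only [Set.mem_empty_iff_false, Set.iUnion_of_empty, Set.iUnion_empty] at hC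
  rw [Subgroup.closure_empty, Subgroup.mem_bot] at hC
  have : v'' = v' * 1 := by rw [← hC]; group
  simpa using this.symm
end

section
/- In a 2-acyclic Cayley frame, for worlds w₁,…,w_k and sets of agents α₁,…,α_k with β := ⋂ᵢ αᵢ: a world w lies in ⋂ᵢ [wᵢ]_{αᵢ} if and only if ⋂ᵢ [wᵢ]_{αᵢ} = [w]_β. -/
lemma cayley_self {G : Type*} [Group G] {Γ : Type*} (gen : Γ → Set G)
    (α : Set Γ) (w : G) : w ∈ cayleyClass gen α w := by
  simp only [cayleyClass, Set.mem_setOf_eq, inv_mul_cancel]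
  exact one_mem _

lemma cayley_eq_of_mem {G : Type*} [Group G] {Γ : Type*} (gen : Γ → Set G)
    (α : Set Γ) {w x : G} (h : x ∈ cayleyClass gen α w) :
    cayleyClass gen α w = cayleyClass gen α x := by
  ext v
  simp only [cayleyClass, Set.mem_setOf_eq] at *
  constructor
  · intro hv
    have := mul_mem (inv_mem h) hv
    simpa [mul_assoc, mul_inv_rev] using this
  · intro hv
    have := mul_mem h hv
    simpa [mul_assoc] using this


lemma set_iInter_succ {X : Type*} {n : ℕ} (f : Fin (n + 1) → Set X) :
    (⋂ i, f i) = f 0 ∩ ⋂ i : Fin n, f i.succ := by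
  ext v
  simp only [Set.mem_iInter, Set.mem_inter_iff]
  constructor
  · intro h
    exact ⟨h 0, fun i => h i.succ⟩
  · rintro ⟨h0, hs⟩ i
    rcases Fin.eq_zero_or_eq_succ i with rfl | ⟨j, rfl⟩
    · exact h0
    · exact hs j

lemma cayley_iInter {G : Type*} [Group G] {Γ : Type*} (gen : Γ → Set G)
    (h2 : ∀ (w : G) (α β : Set Γ),
      cayleyClass gen α w ∩ cayleyClass gen β w = cayleyClass gen (α ∩ β) w)
    (n : ℕ) (α : Fin (n + 1) → Set Γ) (x : G) :
    (⋂ i, cayleyClass gen (α i) x) = cayleyClass gen (⋂ i, α i) x := by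
  induction n with
  | zero =>
      have hα : (⋂ i : Fin 1, α i) = α 0 := by
        ext a; simp [Fin.forall_fin_one]
      rw [hα]
      ext v; simp [Fin.forall_fin_one]
  | succ n ih =>
      rw [set_iInter_succ (fun i => cayleyClass gen (α i) x),
        ih (fun i => α i.succ), h2,
        ← set_iInter_succ α]

/-- In a 2-acyclic Cayley frame, for worlds `w₁,…,w_k` and sets of agents `α₁,…,α_k`
with `β = ⋂ᵢ αᵢ`: a world `x` lies in `⋂ᵢ [wᵢ]_{αᵢ}` iff `⋂ᵢ [wᵢ]_{αᵢ} = [x]_β`. -/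
theorem stmt6 (G : Type*) [Group G] (Γ : Type*) (gen : Γ → Set G)
    (hinv : ∀ a : Γ, ∀ e ∈ gen a, e ≠ 1 ∧ e ^ 2 = 1)
    (hgen : Subgroup.closure (⋃ a : Γ, gen a) = ⊤)
    (h2 : ∀ (w : G) (α β : Set Γ),
      cayleyClass gen α w ∩ cayleyClass gen β w = cayleyClass gen (α ∩ β) w)
    (k : ℕ) (hk : 0 < k) (w : Fin k → G) (α : Fin k → Set Γ) (x : G) :
    x ∈ ⋂ i, cayleyClass gen (α i) (w i) ↔
      (⋂ i, cayleyClass gen (α i) (w i)) = cayleyClass gen (⋂ i, α i) x := by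
  obtain ⟨n, rfl⟩ : ∃ n, k = n + 1 := ⟨k - 1, (Nat.succ_pred_eq_of_pos hk).symm⟩
  constructor
  · intro hx
    have hmem : ∀ i, x ∈ cayleyClass gen (α i) (w i) := Set.mem_iInter.mp hx
    have : (⋂ i, cayleyClass gen (α i) (w i)) = ⋂ i, cayleyClass gen (α i) x := by
      exact Set.iInter_congr fun i => cayley_eq_of_mem gen _ (hmem i)
    rw [this, cayley_iInter gen h2]
  · intro h
    rw [h]
    exact cayley_self gen _ x
end

section
/- For any S5 Kripke structures M and N with distinguished worlds w and v: M,w is bisimilar to N,v (with respect to the relations R_a, a ∈ Γ) if and only if the CK-expansions M^CK,w and N^CK,v are bisimilar (with respect to all relations R_α, α ⊆ Γ). -/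
/-- `Z` is a bisimulation between Kripke structures with accessibility relations
indexed by `τ` and propositions indexed by `I`. -/
def IsBisim {W V τ I : Type*} (R : τ → W → W → Prop) (R' : τ → V → V → Prop)
    (P : I → W → Prop) (P' : I → V → Prop) (Z : W → V → Prop) : Prop :=
  ∀ w v, Z w v →
    (∀ i, P i w ↔ P' i v) ∧
    (∀ t w', R t w w' → ∃ v', R' t v v' ∧ Z w' v') ∧
    (∀ t v', R' t v v' → ∃ w', R t w w' ∧ Z w' v')

/-- Pointed bisimilarity. -/
def Bisimilar {W V τ I : Type*} (R : τ → W → W → Prop) (R' : τ → V → V → Prop)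
    (P : I → W → Prop) (P' : I → V → Prop) (w : W) (v : V) : Prop :=
  ∃ Z : W → V → Prop, IsBisim R R' P P' Z ∧ Z w v

private lemma stmt11_aux_singleton {Γ X : Type*} {R : Γ → X → X → Prop}
    (hR : ∀ a, Equivalence (R a)) (a : Γ) {x y : X}
    (h : Relation.ReflTransGen (fun x y => ∃ b ∈ ({a} : Set Γ), R b x y) x y) :
    R a x y := by
  induction h with
  | refl => exact (hR a).refl x
  | tail _ h ih =>
    obtain ⟨b, hb, hb'⟩ := h
    rw [Set.mem_singleton_iff] at hb
    exact (hR a).trans ih (hb ▸ hb')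

/-- For S5 Kripke structures `M, w` and `N, v`: bisimilarity w.r.t. the relations
`R_a`, `a ∈ Γ`, holds iff the CK-expansions (with `R_α` the reflexive-transitive
closure of `⋃_{a∈α} R_a` for every `α ⊆ Γ`) are bisimilar. -/
theorem stmt11 (Γ I W V : Type*)
    (R : Γ → W → W → Prop) (R' : Γ → V → V → Prop)
    (P : I → W → Prop) (P' : I → V → Prop)
    (hR : ∀ a, Equivalence (R a)) (hR' : ∀ a, Equivalence (R' a))
    (w : W) (v : V) :
    Bisimilar R R' P P' w v ↔
      Bisimilar
        (fun α : Set Γ => Relation.ReflTransGen fun x y => ∃ a ∈ α, R a x y)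
        (fun α : Set Γ => Relation.ReflTransGen fun x y => ∃ a ∈ α, R' a x y)
        P P' w v := by
  constructor
  · rintro ⟨Z, hZ, hwv⟩
    refine ⟨Z, ?_, hwv⟩
    intro w v hZwv
    refine ⟨(hZ w v hZwv).1, ?_, ?_⟩
    · intro α w' hstep
      induction hstep with
      | refl => exact ⟨v, Relation.ReflTransGen.refl, hZwv⟩
      | tail _ h ih =>
        obtain ⟨v₁, hv₁, hZ₁⟩ := ih
        obtain ⟨a, ha, haR⟩ := h
        obtain ⟨v', hR', hZ'⟩ := (hZ _ _ hZ₁).2.1 a _ haR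
        exact ⟨v', hv₁.tail ⟨a, ha, hR'⟩, hZ'⟩
    · intro α v' hstep
      induction hstep with
      | refl => exact ⟨w, Relation.ReflTransGen.refl, hZwv⟩
      | tail _ h ih =>
        obtain ⟨w₁, hw₁, hZ₁⟩ := ih
        obtain ⟨a, ha, haR⟩ := h
        obtain ⟨w', hRw, hZ'⟩ := (hZ _ _ hZ₁).2.2 a _ haR
        exact ⟨w', hw₁.tail ⟨a, ha, hRw⟩, hZ'⟩
  · rintro ⟨Z, hZ, hwv⟩
    refine ⟨Z, ?_, hwv⟩
    intro w v hZwv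
    refine ⟨(hZ w v hZwv).1, ?_, ?_⟩
    · intro a w' haR
      obtain ⟨v', hv', hZ'⟩ := (hZ w v hZwv).2.1 ({a} : Set Γ) w'
        (Relation.ReflTransGen.single ⟨a, rfl, haR⟩)
      exact ⟨v', stmt11_aux_singleton hR' a hv', hZ'⟩
    · intro a v' haR
      obtain ⟨w', hw', hZ'⟩ := (hZ w v hZwv).2.2 ({a} : Set Γ) v'
        (Relation.ReflTransGen.single ⟨a, rfl, haR⟩)
      exact ⟨w', stmt11_aux_singleton hR a hw', hZ'⟩
end

section
/- In a 2-acyclic Cayley frame, for worlds w₁,…,w_k, the set of common cosets ⋂ᵢ ⟦wᵢ⟧ (when nonempty) has a least element: there exists α₀ ⊆ Γ such that for all α ⊆ Γ, [w₁]_α ∈ ⋂ᵢ ⟦wᵢ⟧ if and only if α₀ ⊆ α. -/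
/-- The dual hyperedge of a world: the set of all its cosets. -/
def dualEdge {G : Type*} [Group G] {Γ : Type*} (gen : Γ → Set G) (w : G) :
    Set (Set G) :=
  {c | ∃ α : Set Γ, c = cayleyClass gen α w}

/-- In a 2-acyclic Cayley frame, for worlds `w₁,…,w_k` whose dual hyperedges have a
common element, the set of common cosets `⋂ᵢ ⟦wᵢ⟧` has a least element: there is
`α₀ ⊆ Γ` such that for all `α`, `[w₁]_α ∈ ⋂ᵢ ⟦wᵢ⟧` iff `α₀ ⊆ α`. -/
theorem stmt17 (G : Type*) [Group G] (Γ : Type*) [Finite Γ] (gen : Γ → Set G)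
    (hinv : ∀ a : Γ, ∀ e ∈ gen a, e ≠ 1 ∧ e ^ 2 = 1)
    (hgen : Subgroup.closure (⋃ a : Γ, gen a) = ⊤)
    (h2 : ∀ (w : G) (α β : Set Γ),
      cayleyClass gen α w ∩ cayleyClass gen β w = cayleyClass gen (α ∩ β) w)
    (k : ℕ) (hk : 0 < k) (w : Fin k → G)
    (hcom : ∃ c : Set G, ∀ i, c ∈ dualEdge gen (w i)) :
    ∃ α₀ : Set Γ, ∀ α : Set Γ,
      (∀ i, cayleyClass gen α (w ⟨0, hk⟩) ∈ dualEdge gen (w i)) ↔ α₀ ⊆ α := by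
  classical
  set w0 := w ⟨0, hk⟩ with hw0
  -- characterize membership
  have hmemiff : ∀ α : Set Γ, (∀ i, cayleyClass gen α w0 ∈ dualEdge gen (w i)) ↔
      ∀ i, w0⁻¹ * w i ∈ Subgroup.closure (⋃ a ∈ α, gen a) := by
    intro α
    constructor
    · intro h i
      obtain ⟨β, hβ⟩ := h i
      have hwi : w i ∈ cayleyClass gen β (w i) := by
        simp only [cayleyClass, Set.mem_setOf_eq]
        simpa using one_mem (Subgroup.closure (⋃ a ∈ β, gen a))
      rw [← hβ] at hwi
      exact hwi
    · intro h i
      refine ⟨α, ?_⟩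
      ext v
      simp only [cayleyClass, Set.mem_setOf_eq]
      constructor
      · intro hv
        have := mul_mem (inv_mem (h i)) hv
        simpa [mul_inv_rev, mul_assoc] using this
      · intro hv
        have := mul_mem (h i) hv
        simpa [mul_assoc] using this
  -- the set of good α
  set S : Set (Set Γ) := {α | ∀ i, w0⁻¹ * w i ∈ Subgroup.closure (⋃ a ∈ α, gen a)}
    with hS
  -- S contains univ
  have huniv : Set.univ ∈ S := by
    intro i
    have : (⋃ a ∈ (Set.univ : Set Γ), gen a) = ⋃ a : Γ, gen a := by simp
    rw [this, hgen]
    trivial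
  -- S is closed under intersection
  have hinter : ∀ α ∈ S, ∀ β ∈ S, α ∩ β ∈ S := by
    intro α hα β hβ i
    have h1 := h2 1 α β
    have hx : w0⁻¹ * w i ∈ cayleyClass gen α 1 ∩ cayleyClass gen β 1 := by
      constructor <;> simp only [cayleyClass, Set.mem_setOf_eq, inv_one, one_mul]
      · exact hα i
      · exact hβ i
    rw [h1] at hx
    simpa [cayleyClass] using hx
  -- S is monotone
  have hmono : ∀ α β : Set Γ, α ⊆ β → α ∈ S → β ∈ S := by
    intro α β hsub hα i
    exact Subgroup.closure_mono (Set.biUnion_mono hsub fun _ _ => le_rfl) (hα i)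
  -- take a minimal element of S
  have hfin : S.Finite := Set.toFinite S
  obtain ⟨α₀, hα₀S, hmin⟩ : ∃ a ∈ S, ∀ a' ∈ S, a' ≤ a → a = a' := by
    obtain ⟨a, ha, hm⟩ := Set.Finite.exists_minimalFor id S hfin ⟨Set.univ, huniv⟩
    exact ⟨a, ha, fun a' ha' hle => le_antisymm (hm ha' hle) hle⟩
  refine ⟨α₀, fun α => ?_⟩
  rw [hmemiff]
  constructor
  · intro hα
    have h' : α₀ ∩ α ∈ S := hinter α₀ hα₀S α hα
    have := hmin (α₀ ∩ α) h' (Set.inter_subset_left)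
    intro x hx
    rw [show α₀ = α₀ ∩ α from this] at hx
    exact hx.2
  · intro hsub
    exact hmono α₀ α hsub hα₀S
end
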